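/- (Case p ∈ (0,1].) Fix α ∈ (0,1] and a real p with 0 < p ≤ 1. Suppose Y : {1,…,n} → M is injective and maximizes the matching objective: for every injective Y' : {1,…,n} → M, Σ_i ( n · v_i({Y(i)}) + v_i(M \ H_i) )^p ≥ Σ_i ( n · v_i({Y'(i)}) + v_i(M \ H_i) )^p. Suppose Z = (Z_1,…,Z_n) is an allocation with v_i(Z_i) ≥ (α/(4(n+1))) · ( n · v_i({Y(i)}) + v_i(M \ H_i) ) for every i. Then for every allocation X* = (X*_1,…,X*_n) of pairwise disjoint nonempty subsets of M, Σ_i v_i(Z_i)^p ≥ (α/(4(n+1)))^p · Σ_i v_i(X*_i)^p. -/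

import Mathlib

/-- STATEMENT 12 (Case `p ∈ (0,1]`): If `Y` maximizes the matching objective
`Σ_i (n · v i {Y i} + v i (M \ H i))^p` and `Z` satisfies the lower bound of
the key lemma, then `Σ_i v i (Z i)^p ≥ (α/(4(n+1)))^p · Σ_i v i (X* i)^p` for
every allocation `X*` of pairwise disjoint nonempty subsets of `M`. -/
theorem pmean_welfare_approximation_pos_p
    {G : Type*} [DecidableEq G]
    (n : ℕ) (hn : 0 < n) (M : Finset G) (hm : n ≤ M.card)
    (v : Fin n → Finset G → ℝ)
    (hv0 : ∀ i A, 0 ≤ v i A)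
    (hnorm : ∀ i, v i ∅ = 0)
    (hmono : ∀ i A B, A ⊆ B → v i A ≤ v i B)
    (hsub : ∀ i A B, v i (A ∪ B) ≤ v i A + v i B)
    (α : ℝ) (hα0 : 0 < α) (hα1 : α ≤ 1)
    (p : ℝ) (hp0 : 0 < p) (hp1 : p ≤ 1)
    (H : Fin n → Finset G)
    (hHM : ∀ i, H i ⊆ M) (hHcard : ∀ i, (H i).card = n)
    (hHtop : ∀ i, ∀ g ∈ H i, ∀ g' ∈ M \ H i, v i {g'} ≤ v i {g})
    (Y : Fin n → G) (hYM : ∀ i, Y i ∈ M) (hYinj : Function.Injective Y)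
    (hYopt : ∀ Y' : Fin n → G, Function.Injective Y' → (∀ i, Y' i ∈ M) →
      ∑ i, ((n : ℝ) * v i {Y' i} + v i (M \ H i)) ^ p
        ≤ ∑ i, ((n : ℝ) * v i {Y i} + v i (M \ H i)) ^ p)
    (Z : Fin n → Finset G)
    (hZM : ∀ i, Z i ⊆ M)
    (hZdisj : ∀ i j, i ≠ j → Disjoint (Z i) (Z j))
    (hZ : ∀ i, (α / (4 * ((n : ℝ) + 1))) *
        ((n : ℝ) * v i {Y i} + v i (M \ H i)) ≤ v i (Z i)) :
    ∀ Xs : Fin n → Finset G, (∀ i, Xs i ⊆ M) → (∀ i, (Xs i).Nonempty) →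
      (∀ i j, i ≠ j → Disjoint (Xs i) (Xs j)) →
      (α / (4 * ((n : ℝ) + 1))) ^ p * ∑ i, v i (Xs i) ^ p
        ≤ ∑ i, v i (Z i) ^ p := by
  intro Xs hXsM hXsne hXsdisj
  set c : ℝ := α / (4 * ((n : ℝ) + 1)) with hc
  have hc0 : 0 ≤ c := by
    apply div_nonneg hα0.le
    positivity
  -- subadditivity over singletons
  have hsingle : ∀ i (S : Finset G), v i S ≤ ∑ g ∈ S, v i {g} := by
    intro i S
    induction S using Finset.induction_on with
    | empty => simp [hnorm i]
    | @insert a s hnotmem ih =>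
      have : v i (insert a s) ≤ v i {a} + v i s := by
        have := hsub i {a} s
        rw [Finset.insert_eq]; exact this
      calc v i (insert a s) ≤ v i {a} + v i s := this
        _ ≤ v i {a} + ∑ g ∈ s, v i {g} := by linarith
        _ = ∑ g ∈ insert a s, v i {g} := by
            rw [Finset.sum_insert hnotmem]
  -- for each i, choose a good g ∈ Xs i with the key bound
  have hkey : ∀ i, ∃ g ∈ Xs i,
      v i (Xs i) ≤ (n : ℝ) * v i {g} + v i (M \ H i) := by
    intro i
    by_cases h : (Xs i ∩ H i).Nonempty
    · obtain ⟨g, hg, hgmax⟩ := Finset.exists_max_image (Xs i ∩ H i)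
        (fun g => v i {g}) h
      refine ⟨g, (Finset.mem_inter.mp hg).1, ?_⟩
      have hsplit : v i (Xs i) ≤ v i (Xs i ∩ H i) + v i (Xs i \ H i) := by
        have := hsub i (Xs i ∩ H i) (Xs i \ H i)
        rwa [Finset.union_comm, Finset.sdiff_union_inter] at this
      have h1 : v i (Xs i ∩ H i) ≤ (n : ℝ) * v i {g} := by
        calc v i (Xs i ∩ H i) ≤ ∑ g' ∈ Xs i ∩ H i, v i {g'} := hsingle i _
          _ ≤ (Xs i ∩ H i).card • v i {g} := by
              apply Finset.sum_le_card_nsmul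
              intro x hx; exact hgmax x hx
          _ = ((Xs i ∩ H i).card : ℝ) * v i {g} := by
              simp [nsmul_eq_mul]
          _ ≤ (n : ℝ) * v i {g} := by
              apply mul_le_mul_of_nonneg_right _ (hv0 i {g})
              have : (Xs i ∩ H i).card ≤ (H i).card :=
                Finset.card_le_card Finset.inter_subset_right
              rw [hHcard i] at this
              exact_mod_cast this
      have h2 : v i (Xs i \ H i) ≤ v i (M \ H i) := by
        apply hmono
        exact Finset.sdiff_subset_sdiff (hXsM i) (le_refl _)
      linarith
    · obtain ⟨g, hg⟩ := hXsne i
      refine ⟨g, hg, ?_⟩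
      have hsub' : Xs i ⊆ M \ H i := by
        intro x hx
        rw [Finset.mem_sdiff]
        refine ⟨hXsM i hx, fun hxH => ?_⟩
        exact h ⟨x, Finset.mem_inter.mpr ⟨hx, hxH⟩⟩
      have := hmono i _ _ hsub'
      have hg0 : 0 ≤ (n : ℝ) * v i {g} := mul_nonneg (Nat.cast_nonneg n) (hv0 i {g})
      linarith
  choose Y' hY'mem hY'bound using hkey
  have hY'M : ∀ i, Y' i ∈ M := fun i => hXsM i (hY'mem i)
  have hY'inj : Function.Injective Y' := by
    intro i j hij
    by_contra hne
    have hdisj := hXsdisj i j hne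
    exact (Finset.disjoint_left.mp hdisj (hY'mem i)) (hij ▸ hY'mem j)
  -- nonnegativity of the matching objective terms
  have hterm0 : ∀ (W : Fin n → G) i, 0 ≤ (n : ℝ) * v i {W i} + v i (M \ H i) := by
    intro W i
    have := hv0 i {W i}; have := hv0 i (M \ H i); positivity
  -- Step 1: Σ v(Xs i)^p ≤ Σ (matching term for Y')^p
  have step1 : ∑ i, v i (Xs i) ^ p ≤
      ∑ i, ((n : ℝ) * v i {Y' i} + v i (M \ H i)) ^ p := by
    apply Finset.sum_le_sum
    intro i _
    exact Real.rpow_le_rpow (hv0 i (Xs i)) (hY'bound i) hp0.le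
  have step2 := hYopt Y' hY'inj hY'M
  -- Step 3: c^p * (matching term for Y)^p ≤ v(Z i)^p
  have step3 : ∀ i, c ^ p * ((n : ℝ) * v i {Y i} + v i (M \ H i)) ^ p
      ≤ v i (Z i) ^ p := by
    intro i
    rw [← Real.mul_rpow hc0 (hterm0 Y i)]
    exact Real.rpow_le_rpow (mul_nonneg hc0 (hterm0 Y i)) (hZ i) hp0.le
  calc c ^ p * ∑ i, v i (Xs i) ^ p
      ≤ c ^ p * ∑ i, ((n : ℝ) * v i {Y' i} + v i (M \ H i)) ^ p := by
        apply mul_le_mul_of_nonneg_left step1 (by positivity)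
    _ ≤ c ^ p * ∑ i, ((n : ℝ) * v i {Y i} + v i (M \ H i)) ^ p := by
        apply mul_le_mul_of_nonneg_left step2 (by positivity)
    _ = ∑ i, c ^ p * ((n : ℝ) * v i {Y i} + v i (M \ H i)) ^ p := by
        rw [Finset.mul_sum]
    _ ≤ ∑ i, v i (Z i) ^ p := Finset.sum_le_sum fun i _ => step3 i
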